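/- Let F = (x_1^2 + ... + x_m^2)(y_1^2 + ... + y_n^2) with m ≥ 1, n ≥ 2, and let T/F^⊥ be the apolar (Artinian Gorenstein) algebra. Then the Hilbert function of T/F^⊥ is: 1 in degree 0, m+n in degree 1, mn+2 in degree 2, m+n in degree 3, 1 in degree 4, and 0 in degrees ≥ 5. -/

import Mathlib

open MvPolynomial
open scoped Classical

/-- Differentiation of `F` by the monomial with exponent vector `m`:
`∂^m F`, defined coefficientwise via descending factorials. -/
noncomputable def contract {σ : Type*} (m : σ →₀ ℕ) (F : MvPolynomial σ ℂ) : MvPolynomial σ ℂ :=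
  ∑ k ∈ F.support, monomial (k - m) (F.coeff k * m.prod fun i e => (Nat.descFactorial (k i) e : ℂ))

/-- The apolarity (differentiation) action: `apolar g F = g ∘ F`. -/
noncomputable def apolar {σ : Type*} (g F : MvPolynomial σ ℂ) : MvPolynomial σ ℂ :=
  ∑ m ∈ g.support, g.coeff m • contract m F

lemma apolar_sum_subset {σ : Type*} (F g : MvPolynomial σ ℂ) (s : Finset (σ →₀ ℕ))
    (hs : g.support ⊆ s) : apolar g F = ∑ m ∈ s, g.coeff m • contract m F :=
  Finset.sum_subset hs fun m _ hm => by
    rw [MvPolynomial.notMem_support_iff.mp hm, zero_smul]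

/-- The annihilator `F^⊥ = {g | g ∘ F = 0}` as a `ℂ`-submodule of the ring of
differential operators. -/
noncomputable def perp {σ : Type*} (F : MvPolynomial σ ℂ) : Submodule ℂ (MvPolynomial σ ℂ) where
  carrier := {g | apolar g F = 0}
  zero_mem' := by simp [apolar]
  add_mem' := by
    intro a b ha hb
    simp only [Set.mem_setOf_eq] at *
    have h1 : apolar (a + b) F = ∑ m ∈ a.support ∪ b.support, (a + b).coeff m • contract m F :=
      apolar_sum_subset F _ _ MvPolynomial.support_add
    simp only [MvPolynomial.coeff_add, add_smul] at h1
    rw [Finset.sum_add_distrib,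
      ← apolar_sum_subset F a _ Finset.subset_union_left,
      ← apolar_sum_subset F b _ Finset.subset_union_right] at h1
    rw [h1, ha, hb, add_zero]
  smul_mem' := by
    intro c g hg
    simp only [Set.mem_setOf_eq] at *
    have h1 : apolar (c • g) F = ∑ m ∈ g.support, (c • g).coeff m • contract m F :=
      apolar_sum_subset F _ _ MvPolynomial.support_smul
    simp only [MvPolynomial.coeff_smul, smul_eq_mul, mul_smul] at h1
    rw [← Finset.smul_sum] at h1
    rw [h1, show (∑ m ∈ g.support, g.coeff m • contract m F) = apolar g F from rfl, hg, smul_zero]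

/-- Hilbert function in degree `d` of the graded quotient of the polynomial ring
by the `ℂ`-submodule `N`: the dimension of the image of the space of
degree-`d` homogeneous polynomials in the quotient. -/
noncomputable def hfQ {σ : Type*} (N : Submodule ℂ (MvPolynomial σ ℂ)) (d : ℕ) : ℕ :=
  Module.finrank ℂ ((homogeneousSubmodule σ ℂ d).map N.mkQ)

/-! ### Auxiliary development -/

section Aux
variable {σ : Type*}

lemma contract_sum_subset (m : σ →₀ ℕ) (F : MvPolynomial σ ℂ) (s : Finset (σ →₀ ℕ))
    (hs : F.support ⊆ s) :
    contract m F = ∑ k ∈ s, monomial (k - m)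
      (F.coeff k * m.prod fun i e => (Nat.descFactorial (k i) e : ℂ)) :=
  Finset.sum_subset hs fun k _ hk => by
    rw [MvPolynomial.notMem_support_iff.mp hk, zero_mul, map_zero]

lemma contract_monomial (m k : σ →₀ ℕ) (c : ℂ) :
    contract m (monomial k c) =
      monomial (k - m) (c * m.prod fun i e => (Nat.descFactorial (k i) e : ℂ)) := by
  by_cases hc : c = 0
  · simp [contract, hc]
  · rw [contract_sum_subset m _ {k} (by simp [MvPolynomial.support_monomial, hc])]
    simp

lemma contract_add (m : σ →₀ ℕ) (F G : MvPolynomial σ ℂ) :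
    contract m (F + G) = contract m F + contract m G := by
  rw [contract_sum_subset m (F + G) (F.support ∪ G.support) MvPolynomial.support_add,
    contract_sum_subset m F (F.support ∪ G.support) Finset.subset_union_left,
    contract_sum_subset m G (F.support ∪ G.support) Finset.subset_union_right,
    ← Finset.sum_add_distrib]
  refine Finset.sum_congr rfl fun k _ => ?_
  rw [MvPolynomial.coeff_add, add_mul, map_add]

lemma contract_smul (m : σ →₀ ℕ) (c : ℂ) (F : MvPolynomial σ ℂ) :
    contract m (c • F) = c • contract m F := by
  rw [contract_sum_subset m (c • F) F.support MvPolynomial.support_smul, contract, Finset.smul_sum]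
  refine Finset.sum_congr rfl fun k _ => ?_
  rw [MvPolynomial.coeff_smul, smul_eq_mul, mul_assoc, MvPolynomial.smul_monomial, smul_eq_mul]

/-- `contract m` as a linear map. -/
noncomputable def contractL (m : σ →₀ ℕ) : MvPolynomial σ ℂ →ₗ[ℂ] MvPolynomial σ ℂ where
  toFun := contract m
  map_add' := contract_add m
  map_smul' := contract_smul m

lemma apolar_monomial (e : σ →₀ ℕ) (c : ℂ) (F : MvPolynomial σ ℂ) :
    apolar (monomial e c) F = c • contract e F := by
  by_cases hc : c = 0
  · simp [apolar, hc]
  · rw [apolar_sum_subset F _ {e} (by simp [MvPolynomial.support_monomial, hc])]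
    simp

/-- `fun g => apolar g F` as a linear map. -/
noncomputable def apolarL (F : MvPolynomial σ ℂ) : MvPolynomial σ ℂ →ₗ[ℂ] MvPolynomial σ ℂ where
  toFun g := apolar g F
  map_add' := by
    intro a b
    have h1 : apolar (a + b) F = ∑ m ∈ a.support ∪ b.support, (a + b).coeff m • contract m F :=
      apolar_sum_subset F _ _ MvPolynomial.support_add
    simp only [MvPolynomial.coeff_add, add_smul] at h1
    rw [Finset.sum_add_distrib,
      ← apolar_sum_subset F a _ Finset.subset_union_left,
      ← apolar_sum_subset F b _ Finset.subset_union_right] at h1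
    exact h1
  map_smul' := by
    intro c g
    have h1 : apolar (c • g) F = ∑ m ∈ g.support, (c • g).coeff m • contract m F :=
      apolar_sum_subset F _ _ MvPolynomial.support_smul
    simp only [MvPolynomial.coeff_smul, smul_eq_mul, mul_smul] at h1
    rw [← Finset.smul_sum] at h1
    exact h1

lemma perp_eq_ker (F : MvPolynomial σ ℂ) : perp F = LinearMap.ker (apolarL F) := by
  ext g
  exact Iff.rfl

set_option maxHeartbeats 1000000 in
lemma hfQ_perp_eq (F : MvPolynomial σ ℂ) (d : ℕ) :
    hfQ (perp F) d =
      Module.finrank ℂ ((homogeneousSubmodule σ ℂ d).map (apolarL F)) := by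
  classical
  set A := apolarL F
  set p := homogeneousSubmodule σ ℂ d
  have hk : perp F = LinearMap.ker A := perp_eq_ker F
  set e : (MvPolynomial σ ℂ ⧸ LinearMap.ker A) ≃ₗ[ℂ] LinearMap.range A := A.quotKerEquivRange
  have h1 : hfQ (perp F) d = Module.finrank ℂ (p.map (LinearMap.ker A).mkQ) := by
    rw [hfQ, hk]
  have h2 : Module.finrank ℂ (p.map (LinearMap.ker A).mkQ)
      = Module.finrank ℂ ((p.map (LinearMap.ker A).mkQ).map e.toLinearMap) :=
    (Submodule.equivMapOfInjective e.toLinearMap e.injective _).finrank_eq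
  have h3 : (p.map (LinearMap.ker A).mkQ).map e.toLinearMap
      = p.map (e.toLinearMap ∘ₗ (LinearMap.ker A).mkQ) := (Submodule.map_comp _ _ p).symm
  have h4 : (LinearMap.range A).subtype ∘ₗ (e.toLinearMap ∘ₗ (LinearMap.ker A).mkQ) = A := by
    apply LinearMap.ext
    intro x
    exact A.quotKerEquivRange_apply_mk x
  have h5 : p.map A = (p.map (e.toLinearMap ∘ₗ (LinearMap.ker A).mkQ)).map
      (LinearMap.range A).subtype := by
    rw [← Submodule.map_comp, h4]
  have h6 : Module.finrank ℂ (p.map (e.toLinearMap ∘ₗ (LinearMap.ker A).mkQ))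
      = Module.finrank ℂ ((p.map (e.toLinearMap ∘ₗ (LinearMap.ker A).mkQ)).map
        (LinearMap.range A).subtype) :=
    (Submodule.equivMapOfInjective (LinearMap.range A).subtype
      (LinearMap.range A).injective_subtype
      (p.map (e.toLinearMap ∘ₗ (LinearMap.ker A).mkQ))).finrank_eq
  rw [← h5] at h6
  rw [h1, h2, h3, h6]

/-- The homogeneous submodule is the span of the monomials of that degree. -/
lemma homog_eq_span (d : ℕ) :
    homogeneousSubmodule σ ℂ d =
      Submodule.span ℂ ((fun e => (monomial e (1 : ℂ))) '' {e | e.degree = d}) := by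
  apply le_antisymm
  · intro p hp
    rw [mem_homogeneousSubmodule] at hp
    rw [← p.support_sum_monomial_coeff]
    refine Submodule.sum_mem _ fun k hk => ?_
    have hdeg : k.degree = d := by
      have := hp (MvPolynomial.mem_support_iff.mp hk)
      rw [Finsupp.degree_eq_weight_one]
      exact this
    have : (monomial k (coeff k p)) = (coeff k p) • monomial k (1 : ℂ) := by
      rw [MvPolynomial.smul_monomial, smul_eq_mul, mul_one]
    rw [this]
    exact Submodule.smul_mem _ _ (Submodule.subset_span ⟨k, hdeg, rfl⟩)
  · rw [Submodule.span_le]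
    rintro _ ⟨e, he, rfl⟩
    rw [SetLike.mem_coe, mem_homogeneousSubmodule]
    exact isHomogeneous_monomial _ he

lemma map_homog_eq_span (F : MvPolynomial σ ℂ) (d : ℕ) :
    (homogeneousSubmodule σ ℂ d).map (apolarL F) =
      Submodule.span ℂ ((fun e => contract e F) '' {e | e.degree = d}) := by
  rw [homog_eq_span, Submodule.map_span, ← Set.image_comp]
  congr 1
  ext q
  constructor
  · rintro ⟨e, he, rfl⟩
    exact ⟨e, he, by show contract e F = apolar (monomial e (1 : ℂ)) F; rw [apolar_monomial, one_smul]⟩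
  · rintro ⟨e, he, rfl⟩
    exact ⟨e, he, by show apolar (monomial e (1 : ℂ)) F = contract e F; rw [apolar_monomial, one_smul]⟩
end Aux

section Degree

lemma degree_add' {σ : Type*} (f g : σ →₀ ℕ) : (f + g).degree = f.degree + g.degree := by
  simp only [Finsupp.degree_eq_weight_one]
  exact map_add _ f g

lemma degree_single' {σ : Type*} (a : σ) (b : ℕ) : (Finsupp.single a b).degree = b := by
  by_cases hb : b = 0
  · simp [hb, map_zero]
  · simp [Finsupp.degree_apply, Finsupp.support_single_ne_zero a hb]

lemma degree_sub_add' {σ : Type*} {e k : σ →₀ ℕ} (h : e ≤ k) :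
    k.degree = e.degree + (k - e).degree := by
  conv_lhs => rw [← add_tsub_cancel_of_le h]
  exact degree_add' _ _

lemma deg1_cases {σ : Type*} (f : σ →₀ ℕ) (h : f.degree = 1) : ∃ a, f = Finsupp.single a 1 := by
  classical
  have hne : f ≠ 0 := by
    intro h0
    rw [h0, map_zero] at h
    exact one_ne_zero h.symm
  obtain ⟨a, ha⟩ := Finsupp.ne_iff.mp hne
  simp only [Finsupp.coe_zero, Pi.zero_apply] at ha
  have ha1 : f a = 1 := le_antisymm (h ▸ Finsupp.le_degree a f) (Nat.one_le_iff_ne_zero.mpr ha)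
  refine ⟨a, (Finsupp.eq_single_iff).mpr ⟨?_, ha1⟩⟩
  intro b hb
  simp only [Finset.mem_singleton]
  by_contra hba
  have hsub : {a, b} ⊆ f.support := by
    intro x hx
    simp only [Finset.mem_insert, Finset.mem_singleton] at hx
    rcases hx with rfl | rfl
    · exact Finsupp.mem_support_iff.mpr ha
    · exact hb
  have : f a + f b ≤ f.degree := by
    have := Finset.sum_le_sum_of_subset hsub (f := fun x => f x)
    rwa [Finset.sum_pair (fun hx => hba hx.symm)] at this
  have hb1 : 1 ≤ f b := Nat.one_le_iff_ne_zero.mpr (Finsupp.mem_support_iff.mp hb)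
  omega

lemma deg2_cases {σ : Type*} (f : σ →₀ ℕ) (h : f.degree = 2) :
    (∃ a, f = Finsupp.single a 2) ∨
      (∃ a b, a ≠ b ∧ f = Finsupp.single a 1 + Finsupp.single b 1) := by
  classical
  by_cases h2 : ∃ a, f a = 2
  · obtain ⟨a, ha⟩ := h2
    left
    refine ⟨a, (Finsupp.eq_single_iff).mpr ⟨?_, ha⟩⟩
    intro b hb
    simp only [Finset.mem_singleton]
    by_contra hba
    have hsub : {a, b} ⊆ f.support := by
      intro x hx
      simp only [Finset.mem_insert, Finset.mem_singleton] at hx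
      rcases hx with rfl | rfl
      · exact Finsupp.mem_support_iff.mpr (by omega)
      · exact hb
    have : f a + f b ≤ f.degree := by
      have := Finset.sum_le_sum_of_subset hsub (f := fun x => f x)
      rwa [Finset.sum_pair (fun hx => hba hx.symm)] at this
    have hb1 : 1 ≤ f b := Nat.one_le_iff_ne_zero.mpr (Finsupp.mem_support_iff.mp hb)
    omega
  · right
    push_neg at h2
    have hle : ∀ a, f a ≤ 1 := by
      intro a
      have := h ▸ Finsupp.le_degree a f
      have := h2 a
      omega
    have hcard : f.support.card = 2 := by
      have h1 : f.degree = ∑ a ∈ f.support, f a := rfl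
      have h2' : ∑ a ∈ f.support, f a = f.support.card := by
        rw [Finset.card_eq_sum_ones]
        refine Finset.sum_congr rfl fun a ha => ?_
        have := hle a
        have := Nat.one_le_iff_ne_zero.mpr (Finsupp.mem_support_iff.mp ha)
        omega
      omega
    obtain ⟨a, b, hab, hs⟩ := Finset.card_eq_two.mp hcard
    have hfa : f a = 1 := by
      have ha : a ∈ f.support := hs ▸ by simp
      have := Nat.one_le_iff_ne_zero.mpr (Finsupp.mem_support_iff.mp ha)
      have := hle a
      omega
    have hfb : f b = 1 := by
      have hb : b ∈ f.support := hs ▸ by simp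
      have := Nat.one_le_iff_ne_zero.mpr (Finsupp.mem_support_iff.mp hb)
      have := hle b
      omega
    refine ⟨a, b, hab, ?_⟩
    ext x
    by_cases hxa : x = a
    · subst hxa
      simp [Finsupp.single_apply, hab, hfa, Ne.symm hab]
    · by_cases hxb : x = b
      · subst hxb
        simp [Finsupp.single_apply, hab, hfb]
      · have hx : x ∉ f.support := by
          rw [hs]
          simp [hxa, hxb]
        rw [Finsupp.notMem_support_iff.mp hx]
        simp [Finsupp.single_apply, Ne.symm hxa, Ne.symm hxb]

end Degree

section Concrete
variable {m n : ℕ}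

/-- Exponent vector of the monomial `x_i² y_j²`. -/
noncomputable def EE (i : Fin m) (j : Fin n) : (Fin m ⊕ Fin n) →₀ ℕ :=
  Finsupp.single (Sum.inl i) 2 + Finsupp.single (Sum.inr j) 2

lemma EE_apply_inl (i : Fin m) (j : Fin n) (i' : Fin m) :
    EE i j (Sum.inl i') = if i = i' then 2 else 0 := by
  simp [EE, Finsupp.single_apply]

lemma EE_apply_inr (i : Fin m) (j : Fin n) (j' : Fin n) :
    EE i j (Sum.inr j') = if j = j' then 2 else 0 := by
  simp [EE, Finsupp.single_apply]

lemma EE_degree (i : Fin m) (j : Fin n) : (EE i j).degree = 4 := by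
  rw [EE, degree_add', degree_single', degree_single']

/-- The polynomial `F`. -/
noncomputable def Fmn (m n : ℕ) : MvPolynomial (Fin m ⊕ Fin n) ℂ :=
  (∑ i, (X (Sum.inl i)) ^ 2) * ∑ j, (X (Sum.inr j)) ^ 2

lemma Fmn_eq : Fmn m n = ∑ i, ∑ j, monomial (EE i j) (1 : ℂ) := by
  rw [Fmn, Finset.sum_mul_sum]
  refine Finset.sum_congr rfl fun i _ => Finset.sum_congr rfl fun j _ => ?_
  rw [X_pow_eq_monomial, X_pow_eq_monomial, monomial_mul, one_mul, EE]

/-- Shorthand for the descending-factorial coefficient. -/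
noncomputable def dp {σ : Type*} (e k : σ →₀ ℕ) : ℂ :=
  e.prod fun a t => (Nat.descFactorial (k a) t : ℂ)

lemma contract_Fmn (e : (Fin m ⊕ Fin n) →₀ ℕ) :
    contract e (Fmn m n) = ∑ i, ∑ j, monomial (EE i j - e) (dp e (EE i j)) := by
  rw [Fmn_eq]
  have h1 : contract e (∑ i, ∑ j, monomial (EE i j) (1 : ℂ))
      = ∑ i, ∑ j, contract e (monomial (EE i j) (1 : ℂ)) := by
    rw [show contract e (∑ i, ∑ j, monomial (EE i j) (1 : ℂ))
        = contractL e (∑ i, ∑ j, monomial (EE i j) (1 : ℂ)) from rfl, map_sum]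
    refine Finset.sum_congr rfl fun i _ => ?_
    rw [map_sum]
    rfl
  rw [h1]
  refine Finset.sum_congr rfl fun i _ => Finset.sum_congr rfl fun j _ => ?_
  rw [contract_monomial, one_mul]
  rfl

lemma dp_single {σ : Type*} (a : σ) (s : ℕ) (k : σ →₀ ℕ) :
    dp (Finsupp.single a s) k = (Nat.descFactorial (k a) s : ℂ) := by
  rw [dp, Finsupp.prod_single_index]
  simp

lemma dp_pair {σ : Type*} {a b : σ} (hab : a ≠ b) {s t : ℕ} (hs : s ≠ 0) (ht : t ≠ 0)
    (k : σ →₀ ℕ) :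
    dp (Finsupp.single a s + Finsupp.single b t) k
      = (Nat.descFactorial (k a) s : ℂ) * (Nat.descFactorial (k b) t : ℂ) := by
  classical
  have hsupp : (Finsupp.single a s + Finsupp.single b t).support = {a, b} := by
    rw [Finsupp.support_add_eq, Finsupp.support_single_ne_zero a hs,
      Finsupp.support_single_ne_zero b ht]
    · rfl
    · rw [Finsupp.support_single_ne_zero a hs, Finsupp.support_single_ne_zero b ht]
      simp [hab, Ne.symm hab]
  have ha : (Finsupp.single a s + Finsupp.single b t) a = s := by
    simp [Finsupp.single_apply, Ne.symm hab]
  have hb : (Finsupp.single a s + Finsupp.single b t) b = t := by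
    simp [Finsupp.single_apply, hab]
  rw [dp, Finsupp.prod, hsupp, Finset.prod_pair hab, ha, hb]

lemma dp_eq_zero {σ : Type*} {e k : σ →₀ ℕ} (a : σ) (ha : k a < e a) : dp e k = 0 := by
  have hm : a ∈ e.support := Finsupp.mem_support_iff.mpr (by omega)
  exact Finset.prod_eq_zero hm (by
    rw [Nat.cast_eq_zero, Nat.descFactorial_eq_zero_iff_lt]
    exact ha)

lemma le_of_dp_ne_zero {σ : Type*} {e k : σ →₀ ℕ} (h : dp e k ≠ 0) : e ≤ k := by
  rw [Finsupp.le_def]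
  intro a
  by_contra hc
  exact h (dp_eq_zero a (by omega))

end Concrete

section Helpers

lemma sum_eq_single' {α M : Type*} [Fintype α] [AddCommMonoid M] (f : α → M) (i0 : α)
    (h : ∀ i, i ≠ i0 → f i = 0) : ∑ i, f i = f i0 :=
  Finset.sum_eq_single_of_mem i0 (Finset.mem_univ _) fun i _ hi => h i hi

lemma pair_sub_pair {σ : Type*} {a b : σ} (hab : a ≠ b) (s t s' t' : ℕ) :
    (Finsupp.single a s + Finsupp.single b t) - (Finsupp.single a s' + Finsupp.single b t')
      = Finsupp.single a (s - s') + Finsupp.single b (t - t') := by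
  classical
  ext x
  rw [Finsupp.tsub_apply]
  simp only [Finsupp.add_apply, Finsupp.single_apply]
  by_cases hxa : a = x
  · have hbx : ¬ b = x := fun h => hab (hxa.trans h.symm)
    simp [hxa, hbx]
  · simp only [if_neg hxa, zero_add]
    split_ifs <;> omega

lemma li_of_coeff {σ ι : Type*} [Fintype ι] (v : ι → MvPolynomial σ ℂ)
    (w : ι → (σ →₀ ℕ)) (c : ι → ℂ) (hc : ∀ i, c i ≠ 0)
    (h : ∀ i j, coeff (w i) (v j) = if j = i then c i else 0) :
    LinearIndependent ℂ v := by
  classical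
  rw [Fintype.linearIndependent_iff]
  intro g hg i
  have h2 := congrArg (coeff (w i)) hg
  rw [MvPolynomial.coeff_sum] at h2
  simp only [MvPolynomial.coeff_smul, smul_eq_mul, h, mul_ite, mul_zero,
    MvPolynomial.coeff_zero] at h2
  rw [Finset.sum_ite_eq' Finset.univ i (fun j => g j * c i), if_pos (Finset.mem_univ i)] at h2
  exact (mul_eq_zero.mp h2).resolve_right (hc i)

lemma descF_2_1 : Nat.descFactorial 2 1 = 2 := rfl
lemma descF_2_2 : Nat.descFactorial 2 2 = 2 := rfl
lemma descF_0_1 : Nat.descFactorial 0 1 = 0 := rfl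
lemma descF_0_2 : Nat.descFactorial 0 2 = 0 := rfl

lemma degree_le_of_le {σ : Type*} {e k : σ →₀ ℕ} (h : e ≤ k) : e.degree ≤ k.degree := by
  rw [degree_sub_add' h]
  omega

end Helpers

section PerDegree
variable {m n : ℕ}

lemma dp_EE {m n : ℕ} (i0 : Fin m) (j0 : Fin n) (k : (Fin m ⊕ Fin n) →₀ ℕ) :
    dp (EE i0 j0) k = (Nat.descFactorial (k (Sum.inl i0)) 2 : ℂ)
      * (Nat.descFactorial (k (Sum.inr j0)) 2 : ℂ) := by
  rw [EE]
  exact dp_pair (by simp) two_ne_zero two_ne_zero k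

lemma contract_zero' (F : MvPolynomial (Fin m ⊕ Fin n) ℂ) : contract 0 F = F := by
  rw [contract]
  conv_rhs => rw [← F.support_sum_monomial_coeff]
  refine Finset.sum_congr rfl fun k _ => ?_
  rw [Finsupp.prod_zero_index, mul_one, tsub_zero]

lemma Fmn_ne_zero (hm : 1 ≤ m) (hn : 1 ≤ n) : Fmn m n ≠ 0 := by
  intro h
  have h1 : eval (fun _ => (1 : ℂ)) (Fmn m n) = (m : ℂ) * n := by
    simp [Fmn]
  rw [h, map_zero] at h1
  have hmc : (m : ℂ) ≠ 0 := Nat.cast_ne_zero.mpr (by omega)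
  have hnc : (n : ℂ) ≠ 0 := Nat.cast_ne_zero.mpr (by omega)
  exact (mul_ne_zero hmc hnc) h1.symm

lemma hfQ0 (hm : 1 ≤ m) (hn : 1 ≤ n) : hfQ (perp (Fmn m n)) 0 = 1 := by
  rw [hfQ_perp_eq, map_homog_eq_span]
  have hset : {e : (Fin m ⊕ Fin n) →₀ ℕ | e.degree = 0} = {0} := by
    ext e
    simp [Finsupp.degree_eq_zero_iff]
  rw [hset, Set.image_singleton, contract_zero']
  exact finrank_span_singleton (Fmn_ne_zero hm hn)

lemma hfQ_high (d : ℕ) (hd : 5 ≤ d) : hfQ (perp (Fmn m n)) d = 0 := by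
  rw [hfQ_perp_eq, map_homog_eq_span]
  have hz : Submodule.span ℂ ((fun e => contract e (Fmn m n)) ''
      {e : (Fin m ⊕ Fin n) →₀ ℕ | e.degree = d}) = ⊥ := by
    rw [Submodule.span_eq_bot]
    rintro _ ⟨e, he, rfl⟩
    show contract e (Fmn m n) = 0
    rw [contract_Fmn]
    refine Finset.sum_eq_zero fun i _ => Finset.sum_eq_zero fun j _ => ?_
    have hdp : dp e (EE i j) = 0 := by
      by_contra hne
      have hle := le_of_dp_ne_zero hne
      have := degree_le_of_le hle
      rw [EE_degree, Set.mem_setOf_eq.mp he] at this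
      omega
    rw [hdp, map_zero]
  rw [hz]
  exact finrank_bot ℂ _

lemma hfQ4 (hm : 1 ≤ m) (hn : 1 ≤ n) : hfQ (perp (Fmn m n)) 4 = 1 := by
  have i0 : Fin m := ⟨0, by omega⟩
  have j0 : Fin n := ⟨0, by omega⟩
  rw [hfQ_perp_eq, map_homog_eq_span]
  have hspan : Submodule.span ℂ ((fun e => contract e (Fmn m n)) ''
      {e : (Fin m ⊕ Fin n) →₀ ℕ | e.degree = 4})
      = Submodule.span ℂ {(1 : MvPolynomial (Fin m ⊕ Fin n) ℂ)} := by
    apply le_antisymm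
    · rw [Submodule.span_le]
      rintro _ ⟨e, he, rfl⟩
      show contract e (Fmn m n) ∈ _
      rw [contract_Fmn]
      refine Submodule.sum_mem _ fun i _ => Submodule.sum_mem _ fun j _ => ?_
      by_cases hdp : dp e (EE i j) = 0
      · rw [hdp, map_zero]
        exact Submodule.zero_mem _
      · have hle := le_of_dp_ne_zero hdp
        have hdeg : (EE i j - e).degree = 0 := by
          have := degree_sub_add' hle
          rw [EE_degree, Set.mem_setOf_eq.mp he] at this
          omega
        rw [(Finsupp.degree_eq_zero_iff _).mp hdeg, monomial_zero', C_eq_smul_one]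
        exact Submodule.smul_mem _ _ (Submodule.subset_span rfl)
    · rw [Submodule.span_le]
      rintro _ rfl
      rw [SetLike.mem_coe]
      have hc : contract (EE i0 j0) (Fmn m n) = C (4 : ℂ) := by
        rw [contract_Fmn]
        have hterm : ∀ i j, ¬(i = i0) ∨ ¬(j = j0) →
            monomial (EE i j - EE i0 j0) (dp (EE i0 j0) (EE i j)) = 0 := by
          intro i j hij
          have hdp : dp (EE i0 j0) (EE i j) = 0 := by
            rw [dp_EE]
            rcases hij with hi | hj
            · rw [EE_apply_inl, if_neg hi, descF_0_2]
              simp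
            · rw [EE_apply_inr, if_neg hj, descF_0_2]
              simp
          rw [hdp, map_zero]
        rw [sum_eq_single' _ i0 (fun i hi => Finset.sum_eq_zero fun j _ =>
          hterm i j (Or.inl hi))]
        rw [sum_eq_single' _ j0 (fun j hj => hterm i0 j (Or.inr hj))]
        have hdp : dp (EE i0 j0) (EE i0 j0) = 4 := by
          rw [dp_EE, EE_apply_inl, if_pos rfl, EE_apply_inr, if_pos rfl, descF_2_2]
          norm_num
        rw [hdp, tsub_self, monomial_zero']
      have h1 : (1 : MvPolynomial (Fin m ⊕ Fin n) ℂ)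
          = (4⁻¹ : ℂ) • contract (EE i0 j0) (Fmn m n) := by
        rw [hc, ← C_mul', ← C_mul]
        norm_num
      rw [h1]
      exact Submodule.smul_mem _ _ (Submodule.subset_span ⟨EE i0 j0, EE_degree i0 j0, rfl⟩)
  rw [hspan]
  exact finrank_span_singleton one_ne_zero

end PerDegree

section Contractions
variable {m n : ℕ}

lemma descF_zero_of_ne {t : ℕ} (ht : t ≠ 0) : Nat.descFactorial 0 t = 0 :=
  Nat.descFactorial_eq_zero_iff_lt.mpr (by omega)

lemma dp_mixed (i0 : Fin m) (j0 : Fin n) {s t : ℕ} (hs : s ≠ 0) (ht : t ≠ 0)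
    (k : (Fin m ⊕ Fin n) →₀ ℕ) :
    dp (Finsupp.single (Sum.inl i0) s + Finsupp.single (Sum.inr j0) t) k
      = (Nat.descFactorial (k (Sum.inl i0)) s : ℂ)
        * (Nat.descFactorial (k (Sum.inr j0)) t : ℂ) :=
  dp_pair (by simp) hs ht k

lemma EE_sub_pair (i1 : Fin m) (j1 : Fin n) (s t : ℕ) :
    EE i1 j1 - (Finsupp.single (Sum.inl i1) s + Finsupp.single (Sum.inr j1) t)
      = Finsupp.single (Sum.inl i1) (2 - s) + Finsupp.single (Sum.inr j1) (2 - t) := by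
  rw [EE]
  exact pair_sub_pair (by simp) 2 2 s t

lemma EE_sub_single_inl (i1 : Fin m) (j : Fin n) (s : ℕ) :
    EE i1 j - Finsupp.single (Sum.inl i1) s
      = Finsupp.single (Sum.inl i1) (2 - s) + Finsupp.single (Sum.inr j) 2 := by
  have h := EE_sub_pair i1 j s 0
  simpa using h

lemma EE_sub_single_inr (i : Fin m) (j1 : Fin n) (t : ℕ) :
    EE i j1 - Finsupp.single (Sum.inr j1) t
      = Finsupp.single (Sum.inl i) 2 + Finsupp.single (Sum.inr j1) (2 - t) := by
  have h := EE_sub_pair i j1 0 t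
  simpa using h

/-- Contraction of `F` by a mixed monomial `x_{i1}^s y_{j1}^t`. -/
lemma contract_pair (i1 : Fin m) (j1 : Fin n) {s t : ℕ} (hs : s ≠ 0) (ht : t ≠ 0) :
    contract (Finsupp.single (Sum.inl i1) s + Finsupp.single (Sum.inr j1) t) (Fmn m n)
      = monomial (Finsupp.single (Sum.inl i1) (2 - s) + Finsupp.single (Sum.inr j1) (2 - t))
          ((Nat.descFactorial 2 s : ℂ) * (Nat.descFactorial 2 t : ℂ)) := by
  rw [contract_Fmn]
  rw [sum_eq_single' _ i1 (fun i hi => Finset.sum_eq_zero fun j _ => by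
    rw [dp_mixed i1 j1 hs ht, EE_apply_inl, if_neg hi, descF_zero_of_ne hs]
    simp)]
  rw [sum_eq_single' _ j1 (fun j hj => by
    rw [dp_mixed i1 j1 hs ht, EE_apply_inr, if_neg hj, descF_zero_of_ne ht]
    simp)]
  rw [dp_mixed i1 j1 hs ht, EE_apply_inl, if_pos rfl, EE_apply_inr, if_pos rfl,
    EE_sub_pair]

/-- Contraction of `F` by `x_{i1}^s`. -/
lemma contract_single_inl (i1 : Fin m) {s : ℕ} (hs : s ≠ 0) :
    contract (Finsupp.single (Sum.inl i1) s) (Fmn m n)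
      = ∑ j, monomial (Finsupp.single (Sum.inl i1) (2 - s) + Finsupp.single (Sum.inr j) 2)
          ((Nat.descFactorial 2 s : ℂ)) := by
  rw [contract_Fmn]
  rw [sum_eq_single' _ i1 (fun i hi => Finset.sum_eq_zero fun j _ => by
    rw [dp_single, EE_apply_inl, if_neg hi, descF_zero_of_ne hs]
    simp)]
  refine Finset.sum_congr rfl fun j _ => ?_
  rw [dp_single, EE_apply_inl, if_pos rfl, EE_sub_single_inl]

/-- Contraction of `F` by `y_{j1}^t`. -/
lemma contract_single_inr (j1 : Fin n) {t : ℕ} (ht : t ≠ 0) :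
    contract (Finsupp.single (Sum.inr j1) t) (Fmn m n)
      = ∑ i, monomial (Finsupp.single (Sum.inl i) 2 + Finsupp.single (Sum.inr j1) (2 - t))
          ((Nat.descFactorial 2 t : ℂ)) := by
  rw [contract_Fmn]
  have hin : ∀ (i : Fin m) (j : Fin n), j ≠ j1 →
      monomial (EE i j - Finsupp.single (Sum.inr j1) t)
        (dp (Finsupp.single (Sum.inr j1) t) (EE i j)) = 0 := fun i j hj => by
    rw [dp_single, EE_apply_inr, if_neg hj, descF_zero_of_ne ht]
    simp
  have : ∀ i : Fin m, (∑ j, monomial (EE i j - Finsupp.single (Sum.inr j1) t)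
      (dp (Finsupp.single (Sum.inr j1) t) (EE i j)))
      = monomial (Finsupp.single (Sum.inl i) 2 + Finsupp.single (Sum.inr j1) (2 - t))
          ((Nat.descFactorial 2 t : ℂ)) := by
    intro i
    rw [sum_eq_single' _ j1 (hin i)]
    rw [dp_single, EE_apply_inr, if_pos rfl, EE_sub_single_inr]
  exact Finset.sum_congr rfl fun i _ => this i

/-- Contraction of `F` by `x_a x_b`, `a ≠ b`, vanishes. -/
lemma contract_two_inl {a b : Fin m} (hab : a ≠ b) :
    contract (Finsupp.single (Sum.inl a) 1 + Finsupp.single (Sum.inl b) 1) (Fmn m n) = 0 := by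
  rw [contract_Fmn]
  refine Finset.sum_eq_zero fun i _ => Finset.sum_eq_zero fun j _ => ?_
  have hdp : dp (Finsupp.single (Sum.inl a) 1 + Finsupp.single (Sum.inl b) 1) (EE i j) = 0 := by
    rw [dp_pair (by simp [hab]) one_ne_zero one_ne_zero]
    by_cases hia : i = a
    · rw [EE_apply_inl (i' := b), if_neg (by rw [hia]; exact hab), descF_0_1]
      simp
    · rw [EE_apply_inl (i' := a), if_neg hia, descF_0_1]
      simp
  rw [hdp, map_zero]

/-- Contraction of `F` by `y_a y_b`, `a ≠ b`, vanishes. -/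
lemma contract_two_inr {a b : Fin n} (hab : a ≠ b) :
    contract (Finsupp.single (Sum.inr a) 1 + Finsupp.single (Sum.inr b) 1) (Fmn m n) = 0 := by
  rw [contract_Fmn]
  refine Finset.sum_eq_zero fun i _ => Finset.sum_eq_zero fun j _ => ?_
  have hdp : dp (Finsupp.single (Sum.inr a) 1 + Finsupp.single (Sum.inr b) 1) (EE i j) = 0 := by
    rw [dp_pair (by simp [hab]) one_ne_zero one_ne_zero]
    by_cases hja : j = a
    · rw [EE_apply_inr (j' := b), if_neg (by rw [hja]; exact hab), descF_0_1]
      simp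
    · rw [EE_apply_inr (j' := a), if_neg hja, descF_0_1]
      simp
  rw [hdp, map_zero]

end Contractions

section Degree3
variable {m n : ℕ}

lemma li_X : LinearIndependent ℂ
    (fun a : Fin m ⊕ Fin n => monomial (Finsupp.single a 1) (1 : ℂ)) := by
  refine li_of_coeff _ (fun a => Finsupp.single a 1) (fun _ => 1) (fun _ => one_ne_zero) ?_
  intro a b
  rw [coeff_monomial]
  by_cases hba : b = a
  · subst hba
    simp
  · rw [if_neg (by simp [Finsupp.single_eq_single_iff, hba]), if_neg hba]

lemma hfQ3 (hm : 1 ≤ m) (hn : 1 ≤ n) : hfQ (perp (Fmn m n)) 3 = m + n := by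
  have j0 : Fin n := ⟨0, by omega⟩
  set v : (Fin m ⊕ Fin n) → MvPolynomial (Fin m ⊕ Fin n) ℂ :=
    fun a => monomial (Finsupp.single a 1) (1 : ℂ) with hv
  rw [hfQ_perp_eq, map_homog_eq_span]
  have hspan : Submodule.span ℂ ((fun e => contract e (Fmn m n)) ''
      {e : (Fin m ⊕ Fin n) →₀ ℕ | e.degree = 3}) = Submodule.span ℂ (Set.range v) := by
    apply le_antisymm
    · rw [Submodule.span_le]
      rintro _ ⟨e, he, rfl⟩
      show contract e (Fmn m n) ∈ _
      rw [contract_Fmn]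
      refine Submodule.sum_mem _ fun i _ => Submodule.sum_mem _ fun j _ => ?_
      by_cases hdp : dp e (EE i j) = 0
      · rw [hdp, map_zero]
        exact Submodule.zero_mem _
      · have hle := le_of_dp_ne_zero hdp
        have hdeg : (EE i j - e).degree = 1 := by
          have := degree_sub_add' hle
          rw [EE_degree, Set.mem_setOf_eq.mp he] at this
          omega
        obtain ⟨a, ha⟩ := deg1_cases _ hdeg
        rw [ha, show monomial (Finsupp.single a 1) (dp e (EE i j)) = dp e (EE i j) • v a by
          rw [hv, MvPolynomial.smul_monomial, smul_eq_mul, mul_one]]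
        exact Submodule.smul_mem _ _ (Submodule.subset_span (Set.mem_range_self a))
    · rw [Submodule.span_le]
      rintro _ ⟨a, rfl⟩
      rw [SetLike.mem_coe]
      rcases a with i | j
      · have hc := contract_pair (m := m) (n := n) (s := 1) (t := 2) i j0 (by norm_num) (by norm_num)
        have hc2 : contract (Finsupp.single (Sum.inl i) 1 + Finsupp.single (Sum.inr j0) 2)
            (Fmn m n) = monomial (Finsupp.single (Sum.inl i) 1) (4 : ℂ) := by
          rw [hc]
          norm_num
        have hdeg : (Finsupp.single (Sum.inl i) 1
            + Finsupp.single (Sum.inr j0) 2).degree = 3 := by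
          rw [degree_add', degree_single', degree_single']
        have hmem : contract (Finsupp.single (Sum.inl i) 1 + Finsupp.single (Sum.inr j0) 2)
            (Fmn m n) ∈ Submodule.span ℂ ((fun e => contract e (Fmn m n)) ''
              {e : (Fin m ⊕ Fin n) →₀ ℕ | e.degree = 3}) :=
          Submodule.subset_span ⟨_, hdeg, rfl⟩
        have hva : v (Sum.inl i) = (4⁻¹ : ℂ) • contract
            (Finsupp.single (Sum.inl i) 1 + Finsupp.single (Sum.inr j0) 2) (Fmn m n) := by
          rw [hc2, hv, MvPolynomial.smul_monomial]
          norm_num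
        rw [hva]
        exact Submodule.smul_mem _ _ hmem
      · have hc := contract_pair (m := m) (n := n) (s := 2) (t := 1) ⟨0, by omega⟩ j (by norm_num) (by norm_num)
        have hc2 : contract (Finsupp.single (Sum.inl (⟨0, by omega⟩ : Fin m)) 2
            + Finsupp.single (Sum.inr j) 1) (Fmn m n)
            = monomial (Finsupp.single (Sum.inr j) 1) (4 : ℂ) := by
          rw [hc]
          norm_num [Nat.descFactorial]
        have hdeg : (Finsupp.single (Sum.inl (⟨0, by omega⟩ : Fin m)) 2
            + Finsupp.single (Sum.inr j) 1).degree = 3 := by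
          rw [degree_add', degree_single', degree_single']
        have hmem : contract (Finsupp.single (Sum.inl (⟨0, by omega⟩ : Fin m)) 2
            + Finsupp.single (Sum.inr j) 1) (Fmn m n) ∈
            Submodule.span ℂ ((fun e => contract e (Fmn m n)) ''
              {e : (Fin m ⊕ Fin n) →₀ ℕ | e.degree = 3}) :=
          Submodule.subset_span ⟨_, hdeg, rfl⟩
        have hva : v (Sum.inr j) = (4⁻¹ : ℂ) • contract
            (Finsupp.single (Sum.inl (⟨0, by omega⟩ : Fin m)) 2
              + Finsupp.single (Sum.inr j) 1) (Fmn m n) := by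
          rw [hc2, hv, MvPolynomial.smul_monomial]
          norm_num
        rw [hva]
        exact Submodule.smul_mem _ _ hmem
  rw [hspan, finrank_span_eq_card li_X]
  simp

end Degree3

section Degree1
variable {m n : ℕ}

lemma mixed_eq_iff {i i' : Fin m} {j j' : Fin n} {s t s' t' : ℕ} (hs : s ≠ 0) (ht : t ≠ 0) :
    (Finsupp.single (Sum.inl i) s + Finsupp.single (Sum.inr j) t
      = Finsupp.single (Sum.inl i') s' + Finsupp.single (Sum.inr j') t')
    ↔ (i = i' ∧ s = s' ∧ j = j' ∧ t = t') := by
  constructor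
  · intro h
    have h1 := DFunLike.congr_fun h (Sum.inl i)
    have h2 := DFunLike.congr_fun h (Sum.inr j)
    have h3 := DFunLike.congr_fun h (Sum.inl i')
    have h4 := DFunLike.congr_fun h (Sum.inr j')
    simp only [Finsupp.add_apply, Finsupp.single_apply] at h1 h2 h3 h4
    by_cases hii : i = i' <;> by_cases hjj : j = j' <;>
      simp_all <;> omega
  · rintro ⟨rfl, rfl, rfl, rfl⟩
    rfl

/-- The degree-one contractions. -/
noncomputable def u1 (m n : ℕ) : (Fin m ⊕ Fin n) → MvPolynomial (Fin m ⊕ Fin n) ℂ :=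
  Sum.elim
    (fun i => ∑ j, monomial (Finsupp.single (Sum.inl i) 1 + Finsupp.single (Sum.inr j) 2) (2:ℂ))
    (fun j => ∑ i, monomial (Finsupp.single (Sum.inl i) 2 + Finsupp.single (Sum.inr j) 1) (2:ℂ))

lemma contract_x (i : Fin m) :
    contract (Finsupp.single (Sum.inl i) 1) (Fmn m n) = u1 m n (Sum.inl i) := by
  rw [contract_single_inl i (s := 1) (by norm_num), u1]
  norm_num [Nat.descFactorial]

lemma contract_y (j : Fin n) :
    contract (Finsupp.single (Sum.inr j) 1) (Fmn m n) = u1 m n (Sum.inr j) := by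
  rw [contract_single_inr j (t := 1) (by norm_num), u1]
  norm_num [Nat.descFactorial]

lemma li_u1 (hm : 1 ≤ m) (hn : 1 ≤ n) : LinearIndependent ℂ (u1 m n) := by
  have i0 : Fin m := ⟨0, by omega⟩
  have j0 : Fin n := ⟨0, by omega⟩
  refine li_of_coeff _
    (Sum.elim (fun i => Finsupp.single (Sum.inl i) 1 + Finsupp.single (Sum.inr j0) 2)
      (fun j => Finsupp.single (Sum.inl i0) 2 + Finsupp.single (Sum.inr j) 1))
    (fun _ => 2) (fun _ => two_ne_zero) ?_
  rintro (i | j) (i' | j') <;>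
    simp only [Sum.elim_inl, Sum.elim_inr, u1, MvPolynomial.coeff_sum, coeff_monomial]
  · -- coeff (w (inl i)) (u1 (inl i'))
    by_cases hii : i' = i
    · subst hii
      rw [if_pos (by rfl), Finset.sum_eq_single j0]
      · rw [if_pos rfl]
      · intro j _ hj
        rw [if_neg (by
          rw [mixed_eq_iff one_ne_zero two_ne_zero]
          rintro ⟨-, -, h, -⟩
          exact hj h)]
      · intro h
        exact absurd (Finset.mem_univ _) h
    · rw [if_neg (by simp [hii]), Finset.sum_eq_zero]
      intro j _
      rw [if_neg (by
        rw [mixed_eq_iff one_ne_zero two_ne_zero]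
        rintro ⟨h, -, -, -⟩
        exact hii h)]
  · rw [if_neg (by simp), Finset.sum_eq_zero]
    intro i' _
    rw [if_neg (by
      rw [mixed_eq_iff two_ne_zero one_ne_zero]
      rintro ⟨-, h, -, -⟩
      exact absurd h (by norm_num))]
  · rw [if_neg (by simp), Finset.sum_eq_zero]
    intro j' _
    rw [if_neg (by
      rw [mixed_eq_iff one_ne_zero two_ne_zero]
      rintro ⟨-, h, -, -⟩
      exact absurd h (by norm_num))]
  · by_cases hjj : j' = j
    · subst hjj
      rw [if_pos (by rfl), Finset.sum_eq_single i0]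
      · rw [if_pos rfl]
      · intro i _ hi
        rw [if_neg (by
          rw [mixed_eq_iff two_ne_zero one_ne_zero]
          rintro ⟨h, -, -, -⟩
          exact hi h)]
      · intro h
        exact absurd (Finset.mem_univ _) h
    · rw [if_neg (by simp [hjj]), Finset.sum_eq_zero]
      intro i _
      rw [if_neg (by
        rw [mixed_eq_iff two_ne_zero one_ne_zero]
        rintro ⟨-, -, h, -⟩
        exact hjj h)]

lemma hfQ1 (hm : 1 ≤ m) (hn : 1 ≤ n) : hfQ (perp (Fmn m n)) 1 = m + n := by
  rw [hfQ_perp_eq, map_homog_eq_span]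
  have hspan : Submodule.span ℂ ((fun e => contract e (Fmn m n)) ''
      {e : (Fin m ⊕ Fin n) →₀ ℕ | e.degree = 1}) = Submodule.span ℂ (Set.range (u1 m n)) := by
    apply le_antisymm
    · rw [Submodule.span_le]
      rintro _ ⟨e, he, rfl⟩
      show contract e (Fmn m n) ∈ _
      obtain ⟨a, rfl⟩ := deg1_cases _ (Set.mem_setOf_eq.mp he)
      rcases a with i | j
      · rw [contract_x]
        exact Submodule.subset_span (Set.mem_range_self _)
      · rw [contract_y]
        exact Submodule.subset_span (Set.mem_range_self _)
    · rw [Submodule.span_le]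
      rintro _ ⟨a, rfl⟩
      rw [SetLike.mem_coe]
      rcases a with i | j
      · rw [← contract_x]
        exact Submodule.subset_span ⟨_, degree_single' _ _, rfl⟩
      · rw [← contract_y]
        exact Submodule.subset_span ⟨_, degree_single' _ _, rfl⟩
  rw [hspan, finrank_span_eq_card (li_u1 hm hn)]
  simp

end Degree1

section Degree2
variable {m n : ℕ}

/-- The degree-two contractions: mixed monomials, and the two quadrics. -/
noncomputable def v2 (m n : ℕ) : ((Fin m × Fin n) ⊕ Bool) → MvPolynomial (Fin m ⊕ Fin n) ℂ :=
  Sum.elim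
    (fun p => monomial (Finsupp.single (Sum.inl p.1) 1 + Finsupp.single (Sum.inr p.2) 1) (4:ℂ))
    (fun b => cond b
      (∑ i, monomial (Finsupp.single (Sum.inl i) 2) (2:ℂ))
      (∑ j, monomial (Finsupp.single (Sum.inr j) 2) (2:ℂ)))

lemma contract_xx (i : Fin m) :
    contract (Finsupp.single (Sum.inl i) 2) (Fmn m n) = v2 m n (Sum.inr false) := by
  rw [contract_single_inl i (s := 2) (by norm_num), v2]
  norm_num [Nat.descFactorial]

lemma contract_yy (j : Fin n) :
    contract (Finsupp.single (Sum.inr j) 2) (Fmn m n) = v2 m n (Sum.inr true) := by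
  rw [contract_single_inr j (t := 2) (by norm_num), v2]
  norm_num [Nat.descFactorial]

lemma contract_xy (i : Fin m) (j : Fin n) :
    contract (Finsupp.single (Sum.inl i) 1 + Finsupp.single (Sum.inr j) 1) (Fmn m n)
      = v2 m n (Sum.inl (i, j)) := by
  rw [contract_pair (s := 1) (t := 1) i j (by norm_num) (by norm_num), v2]
  norm_num [Nat.descFactorial]

lemma li_v2 (hm : 1 ≤ m) (hn : 1 ≤ n) : LinearIndependent ℂ (v2 m n) := by
  have i0 : Fin m := ⟨0, by omega⟩
  have j0 : Fin n := ⟨0, by omega⟩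
  refine li_of_coeff _
    (Sum.elim (fun p => Finsupp.single (Sum.inl p.1) 1 + Finsupp.single (Sum.inr p.2) 1)
      (fun b => cond b (Finsupp.single (Sum.inl i0) 2) (Finsupp.single (Sum.inr j0) 2)))
    (Sum.elim (fun _ => 4) (fun _ => 2))
    (by rintro (p | b) <;> norm_num) ?_
  rintro (⟨i, j⟩ | b) (⟨i', j'⟩ | b')
  · -- pair vs pair
    simp only [Sum.elim_inl, v2, coeff_monomial]
    by_cases hp : (i', j') = (i, j)
    · obtain ⟨rfl, rfl⟩ := Prod.mk.injEq .. ▸ hp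
      simp
    · rw [if_neg (by
        rw [mixed_eq_iff one_ne_zero one_ne_zero]
        rintro ⟨h1, -, h2, -⟩
        exact hp (by rw [h1, h2])), if_neg (by simp [hp])]
  · -- w pair, v quadric
    cases b'
    · simp only [Sum.elim_inl, Sum.elim_inr, v2, cond_false, MvPolynomial.coeff_sum,
        coeff_monomial]
      rw [Finset.sum_eq_zero (fun x _ => by
        rw [if_neg (fun h => by
          have := DFunLike.congr_fun h (Sum.inl i)
          simp [Finsupp.single_apply] at this)]), if_neg (by simp)]
    · simp only [Sum.elim_inl, Sum.elim_inr, v2, cond_true, MvPolynomial.coeff_sum,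
        coeff_monomial]
      rw [Finset.sum_eq_zero (fun x _ => by
        rw [if_neg (fun h => by
          have := DFunLike.congr_fun h (Sum.inr j)
          simp [Finsupp.single_apply] at this)]), if_neg (by simp)]
  · -- w quadric, v pair
    cases b
    · simp only [Sum.elim_inl, Sum.elim_inr, v2, cond_false, coeff_monomial]
      rw [if_neg (fun h => by
        have := DFunLike.congr_fun h (Sum.inl i')
        simp [Finsupp.single_apply] at this), if_neg (by simp)]
    · simp only [Sum.elim_inl, Sum.elim_inr, v2, cond_true, coeff_monomial]
      rw [if_neg (fun h => by
        have := DFunLike.congr_fun h (Sum.inr j')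
        simp [Finsupp.single_apply] at this), if_neg (by simp)]
  · -- quadric vs quadric
    cases b <;> cases b' <;>
      simp only [Sum.elim_inr, v2, cond_false, cond_true, MvPolynomial.coeff_sum,
        coeff_monomial]
    · rw [Finset.sum_eq_single j0 (fun x _ hx => by
        rw [if_neg (by
          simp only [Finsupp.single_eq_single_iff]
          rintro (⟨h, -⟩ | ⟨h, -⟩)
          · exact hx (Sum.inr.inj h)
          · exact two_ne_zero h)]) (fun h => absurd (Finset.mem_univ _) h)]
      simp
    · rw [Finset.sum_eq_zero (fun x _ => by
        rw [if_neg (fun h => by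
          have := DFunLike.congr_fun h (Sum.inl x)
          simp [Finsupp.single_apply] at this)]), if_neg (by simp)]
    · rw [Finset.sum_eq_zero (fun x _ => by
        rw [if_neg (fun h => by
          have := DFunLike.congr_fun h (Sum.inr x)
          simp [Finsupp.single_apply] at this)]), if_neg (by simp)]
    · rw [Finset.sum_eq_single i0 (fun x _ hx => by
        rw [if_neg (by
          simp only [Finsupp.single_eq_single_iff]
          rintro (⟨h, -⟩ | ⟨h, -⟩)
          · exact hx (Sum.inl.inj h)
          · exact two_ne_zero h)]) (fun h => absurd (Finset.mem_univ _) h)]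
      simp

lemma hfQ2 (hm : 1 ≤ m) (hn : 1 ≤ n) : hfQ (perp (Fmn m n)) 2 = m * n + 2 := by
  rw [hfQ_perp_eq, map_homog_eq_span]
  have hspan : Submodule.span ℂ ((fun e => contract e (Fmn m n)) ''
      {e : (Fin m ⊕ Fin n) →₀ ℕ | e.degree = 2}) = Submodule.span ℂ (Set.range (v2 m n)) := by
    apply le_antisymm
    · rw [Submodule.span_le]
      rintro _ ⟨e, he, rfl⟩
      show contract e (Fmn m n) ∈ _
      rcases deg2_cases _ (Set.mem_setOf_eq.mp he) with ⟨a, rfl⟩ | ⟨a, b, hab, rfl⟩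
      · rcases a with i | j
        · rw [contract_xx]
          exact Submodule.subset_span (Set.mem_range_self _)
        · rw [contract_yy]
          exact Submodule.subset_span (Set.mem_range_self _)
      · rcases a with i | j <;> rcases b with i' | j'
        · rw [contract_two_inl (fun h => hab (by rw [h]))]
          exact Submodule.zero_mem _
        · rw [contract_xy]
          exact Submodule.subset_span (Set.mem_range_self _)
        · rw [add_comm, contract_xy]
          exact Submodule.subset_span (Set.mem_range_self _)
        · rw [contract_two_inr (fun h => hab (by rw [h]))]
          exact Submodule.zero_mem _
    · rw [Submodule.span_le]
      rintro _ ⟨a, rfl⟩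
      rw [SetLike.mem_coe]
      rcases a with ⟨i, j⟩ | b
      · rw [← contract_xy]
        refine Submodule.subset_span ⟨_, ?_, rfl⟩
        rw [Set.mem_setOf_eq, degree_add', degree_single', degree_single']
      · cases b
        · rw [← contract_xx ⟨0, by omega⟩]
          exact Submodule.subset_span ⟨_, degree_single' _ _, rfl⟩
        · rw [← contract_yy ⟨0, by omega⟩]
          exact Submodule.subset_span ⟨_, degree_single' _ _, rfl⟩
  rw [hspan, finrank_span_eq_card (li_v2 hm hn)]
  simp

end Degree2

/-- For `F = (x_1^2 + ⋯ + x_m^2)(y_1^2 + ⋯ + y_n^2)` with `m ≥ 1`, `n ≥ 2`, the Hilbert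
function of the apolar algebra `T/F^⊥` is `1, m+n, mn+2, m+n, 1` in degrees `0,…,4`
and `0` in degrees `≥ 5`. -/
theorem statement3 (m n : ℕ) (hm : 1 ≤ m) (hn : 2 ≤ n) :
    let F : MvPolynomial (Fin m ⊕ Fin n) ℂ :=
      (∑ i, (X (Sum.inl i)) ^ 2) * ∑ j, (X (Sum.inr j)) ^ 2
    hfQ (perp F) 0 = 1 ∧ hfQ (perp F) 1 = m + n ∧ hfQ (perp F) 2 = m * n + 2 ∧
      hfQ (perp F) 3 = m + n ∧ hfQ (perp F) 4 = 1 ∧ ∀ d, 5 ≤ d → hfQ (perp F) d = 0 := by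
  intro F
  have hn1 : 1 ≤ n := by omega
  exact ⟨hfQ0 hm hn1, hfQ1 hm hn1, hfQ2 hm hn1, hfQ3 hm hn1, hfQ4 hm hn1,
    fun d hd => hfQ_high d hd⟩
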